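/- Let f : ℕ → ℝ be an arithmetic function with f(1) = 1 whose absolute value is submultiplicative, i.e., |f(m)|·|f(n)| ≥ |f(mn)| for all m, n ∈ ℕ. Assume there exist C > 0 and γ ∈ ℝ such that |f(n)| ≤ C n^γ for all n ≥ 2. Then for all n ≥ 2, the Dirichlet inverse satisfies |f⁻¹(n)| ≤ H(n) · C^{Ω(n)} · n^γ ≤ C^{Ω(n)} · n^{γ+ρ}, where ρ > 1 is the real number satisfying ζ(ρ) = 2 (ρ = 1.72865…). -/

import Mathlib

/-- `Hfac n` is the number of ordered factorizations of `n`, i.e. the number of finite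
sequences `(d_1, …, d_k)` with each `d_i ≥ 2` and product `n`. -/
noncomputable def Hfac (n : ℕ) : ℕ :=
  Nat.card {l : List ℕ // (∀ d ∈ l, 2 ≤ d) ∧ l.prod = n}

lemma list_eq_nil_of_prod_one {l : List ℕ} (h1 : ∀ d ∈ l, 2 ≤ d) (h2 : l.prod = 1) :
    l = [] := by
  cases l with
  | nil => rfl
  | cons a t =>
    exfalso
    have ha : 2 ≤ a := h1 a (by simp)
    have hd : a ∣ (a :: t).prod := List.dvd_prod (by simp)
    rw [h2] at hd
    have := Nat.le_of_dvd one_pos hd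
    omega

/-- The map sending a proper divisor `d` of `n` and a factorization of `d` to the
factorization of `n` obtained by prepending `n / d`. -/
def facMap (n : ℕ) (hn : 2 ≤ n) :
    ((d : n.properDivisors) × {l : List ℕ // (∀ d ∈ l, 2 ≤ d) ∧ l.prod = (d : ℕ)}) →
      {l : List ℕ // (∀ d ∈ l, 2 ≤ d) ∧ l.prod = n} := fun y => by
  refine ⟨(n / y.1) :: y.2.1, ?_, ?_⟩
  · have hd := (Nat.mem_properDivisors.mp y.1.2)
    have hpos : 0 < (y.1 : ℕ) := Nat.pos_of_mem_properDivisors y.1.2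
    have hmul : n / (y.1 : ℕ) * (y.1 : ℕ) = n := Nat.div_mul_cancel hd.1
    have hne1 : n / (y.1 : ℕ) ≠ 1 := by
      intro h; rw [h, one_mul] at hmul; omega
    have hne0 : n / (y.1 : ℕ) ≠ 0 := by
      intro h; rw [h, zero_mul] at hmul; omega
    intro d hd'
    rcases List.mem_cons.mp hd' with h | h
    · omega
    · exact y.2.2.1 d h
  · have hd := (Nat.mem_properDivisors.mp y.1.2)
    rw [List.prod_cons, y.2.2.2]
    exact Nat.div_mul_cancel hd.1

lemma facMap_bijective (n : ℕ) (hn : 2 ≤ n) : Function.Bijective (facMap n hn) := by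
  constructor
  · rintro ⟨⟨d₁, hd₁⟩, ⟨t₁, ht₁, hp₁⟩⟩ ⟨⟨d₂, hd₂⟩, ⟨t₂, ht₂, hp₂⟩⟩ h
    have h' : (n / d₁) :: t₁ = (n / d₂) :: t₂ := congrArg Subtype.val h
    have htt : t₁ = t₂ := (List.cons.injEq _ _ _ _ ▸ h').2
    have hdd : d₁ = d₂ := by
      have e1 : t₁.prod = d₁ := hp₁
      have e2 : t₂.prod = d₂ := hp₂
      rw [← e1, ← e2, htt]
    subst hdd
    subst htt
    rfl
  · rintro ⟨l, h1, h2⟩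
    cases l with
    | nil => exfalso; simp at h2; omega
    | cons a t =>
      have ha : 2 ≤ a := h1 a (by simp)
      have hprod : a * t.prod = n := by rw [← h2, List.prod_cons]
      have htpos : 0 < t.prod := by
        rcases Nat.eq_zero_or_pos t.prod with h | h
        · rw [h, mul_zero] at hprod; omega
        · exact h
      have hdvd : t.prod ∣ n := ⟨a, by rw [← hprod, mul_comm]⟩
      have hlt : t.prod < n := by
        have := Nat.mul_le_mul_right t.prod ha
        omega
      have hmem : t.prod ∈ n.properDivisors := Nat.mem_properDivisors.mpr ⟨hdvd, hlt⟩
      refine ⟨⟨⟨t.prod, hmem⟩, ⟨t, fun d hd => h1 d (by simp [hd]), rfl⟩⟩, ?_⟩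
      apply Subtype.ext
      show (n / t.prod) :: t = a :: t
      have : n / t.prod = a := by rw [← hprod, Nat.mul_div_cancel _ htpos]
      rw [this]

lemma facFinite : ∀ n : ℕ, Finite {l : List ℕ // (∀ d ∈ l, 2 ≤ d) ∧ l.prod = n} := by
  intro n
  induction n using Nat.strong_induction_on with
  | _ n ih =>
    match n with
    | 0 =>
      have : IsEmpty {l : List ℕ // (∀ d ∈ l, 2 ≤ d) ∧ l.prod = 0} := by
        constructor
        rintro ⟨l, h1, h2⟩
        have : (0 : ℕ) ∈ l := List.prod_eq_zero_iff.mp h2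
        have := h1 0 this
        omega
      exact Finite.of_subsingleton
    | 1 =>
      have : Subsingleton {l : List ℕ // (∀ d ∈ l, 2 ≤ d) ∧ l.prod = 1} := by
        constructor
        rintro ⟨l, hl1, hl2⟩ ⟨m, hm1, hm2⟩
        apply Subtype.ext
        show l = m
        rw [list_eq_nil_of_prod_one hl1 hl2, list_eq_nil_of_prod_one hm1 hm2]
      exact Finite.of_subsingleton
    | (k + 2) =>
      have hn : 2 ≤ k + 2 := by omega
      haveI : ∀ d : (k + 2).properDivisors,
          Finite {l : List ℕ // (∀ x ∈ l, 2 ≤ x) ∧ l.prod = (d : ℕ)} := fun d =>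
        ih _ (Nat.mem_properDivisors.mp d.2).2
      exact Finite.of_surjective (facMap (k + 2) hn) (facMap_bijective (k + 2) hn).2

lemma Hfac_one : Hfac 1 = 1 := by
  rw [Hfac]
  haveI : Nonempty {l : List ℕ // (∀ d ∈ l, 2 ≤ d) ∧ l.prod = 1} :=
    ⟨⟨[], by simp, by simp⟩⟩
  haveI : Subsingleton {l : List ℕ // (∀ d ∈ l, 2 ≤ d) ∧ l.prod = 1} := by
    constructor
    rintro ⟨l, hl1, hl2⟩ ⟨m, hm1, hm2⟩
    apply Subtype.ext
    show l = m
    rw [list_eq_nil_of_prod_one hl1 hl2, list_eq_nil_of_prod_one hm1 hm2]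
  exact Nat.card_unique

lemma Hfac_rec (n : ℕ) (hn : 2 ≤ n) : Hfac n = ∑ d ∈ n.properDivisors, Hfac d := by
  haveI inst : ∀ d : ℕ, Finite {l : List ℕ // (∀ x ∈ l, 2 ≤ x) ∧ l.prod = d} := facFinite
  letI : ∀ d : ℕ, Fintype {l : List ℕ // (∀ x ∈ l, 2 ≤ x) ∧ l.prod = d} := fun d =>
    Fintype.ofFinite _
  rw [Hfac, ← Nat.card_congr (Equiv.ofBijective _ (facMap_bijective n hn)),
    Nat.card_eq_fintype_card, Fintype.card_sigma]
  rw [← Finset.sum_coe_sort n.properDivisors (fun d => Hfac d)]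
  exact Finset.sum_congr rfl fun d _ => by
    rw [Hfac, Nat.card_eq_fintype_card]

lemma f_bound (f : ℕ → ℝ) (C γ : ℝ)
    (hsub : ∀ m n : ℕ, 0 < m → 0 < n → |f (m * n)| ≤ |f m| * |f n|)
    (hf : ∀ n : ℕ, 2 ≤ n → |f n| ≤ C * (n : ℝ) ^ γ) :
    ∀ n : ℕ, 2 ≤ n → |f n| ≤ C ^ n.primeFactorsList.length * (n : ℝ) ^ γ := by
  intro n
  induction n using Nat.strong_induction_on with
  | _ n ih =>
    intro hn
    by_cases hp : n.Prime
    · rw [Nat.primeFactorsList_prime hp]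
      simpa using hf n hn
    · have hpp : Nat.Prime n.minFac := Nat.minFac_prime (by omega)
      obtain ⟨m, hnm'⟩ := Nat.minFac_dvd n
      set p := n.minFac with hpdef
      have hnm : p * m = n := hnm'.symm
      have hp2 : 2 ≤ p := hpp.two_le
      have hm0 : m ≠ 0 := by rintro h; rw [h, mul_zero] at hnm; omega
      have hm1 : m ≠ 1 := by
        intro h; rw [h, mul_one] at hnm
        exact hp (hnm ▸ hpp)
      have hm2 : 2 ≤ m := by omega
      have hmlt : m < n := by
        have := Nat.mul_le_mul_right m hp2
        omega
      have hfm := ih m hmlt hm2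
      have hfp := hf p hp2
      have hΩ : n.primeFactorsList.length = m.primeFactorsList.length + 1 := by
        rw [← hnm, (Nat.perm_primeFactorsList_mul (by omega) hm0).length_eq,
          List.length_append, Nat.primeFactorsList_prime hpp]
        simp [Nat.add_comm]
      have hcast : (n : ℝ) ^ γ = (p : ℝ) ^ γ * (m : ℝ) ^ γ := by
        rw [← hnm]
        push_cast
        exact Real.mul_rpow (Nat.cast_nonneg p) (Nat.cast_nonneg m)
      calc |f n| = |f (p * m)| := by rw [hnm]
        _ ≤ |f p| * |f m| := hsub p m (by omega) (by omega)
        _ ≤ (C * (p : ℝ) ^ γ) * (C ^ m.primeFactorsList.length * (m : ℝ) ^ γ) := by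
            apply mul_le_mul hfp hfm (abs_nonneg _)
            have h0 : 0 ≤ |f p| := abs_nonneg _
            linarith [hfp]
        _ = C ^ n.primeFactorsList.length * (n : ℝ) ^ γ := by
            rw [hΩ, hcast, pow_succ]
            ring

lemma g_bound (f g : ℕ → ℝ) (hf1 : f 1 = 1)
    (hginv : ∀ n : ℕ, 0 < n →
      ∑ d ∈ n.divisors, f (n / d) * g d = if n = 1 then 1 else 0)
    (C γ : ℝ) (hC : 0 < C)
    (hfb : ∀ n : ℕ, 2 ≤ n → |f n| ≤ C ^ n.primeFactorsList.length * (n : ℝ) ^ γ) :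
    ∀ n : ℕ, 1 ≤ n →
      |g n| ≤ (Hfac n : ℝ) * C ^ n.primeFactorsList.length * (n : ℝ) ^ γ := by
  have hg1 : g 1 = 1 := by
    have := hginv 1 one_pos
    simp [Nat.divisors_one, hf1] at this
    exact this
  intro n
  induction n using Nat.strong_induction_on with
  | _ n ih =>
    intro hn
    rcases eq_or_lt_of_le hn with h1 | h1
    · rw [← h1]
      simp [hg1, Hfac_one, Nat.primeFactorsList_one]
    · have hn2 : 2 ≤ n := h1
      -- recursion for g
      have hrec : g n = -∑ d ∈ n.properDivisors, f (n / d) * g d := by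
        have h0 := hginv n (by omega)
        rw [if_neg (by omega), ← Nat.insert_self_properDivisors (by omega : n ≠ 0),
          Finset.sum_insert Nat.self_notMem_properDivisors] at h0
        rw [Nat.div_self (by omega : 0 < n), hf1, one_mul] at h0
        linarith
    -- bound the sum
      rw [hrec, abs_neg]
      calc |∑ d ∈ n.properDivisors, f (n / d) * g d|
          ≤ ∑ d ∈ n.properDivisors, |f (n / d) * g d| := Finset.abs_sum_le_sum_abs _ _
        _ ≤ ∑ d ∈ n.properDivisors,
              (Hfac d : ℝ) * C ^ n.primeFactorsList.length * (n : ℝ) ^ γ := by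
            apply Finset.sum_le_sum
            intro d hd
            obtain ⟨hdvd, hlt⟩ := Nat.mem_properDivisors.mp hd
            have hd1 : 1 ≤ d := Nat.pos_of_mem_properDivisors hd
            obtain ⟨e, hde⟩ := hdvd
            have hed : e * d = n := by rw [hde]; ring
            have hnd : n / d = e := by
              rw [hde]; exact Nat.mul_div_cancel_left e (by omega)
            rw [hnd]
            have he0 : e ≠ 0 := by rintro h; rw [h, zero_mul] at hed; omega
            have he1 : e ≠ 1 := by intro h; rw [h, one_mul] at hed; omega
            have he2 : 2 ≤ e := by omega
            have hΩ : n.primeFactorsList.length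
                = e.primeFactorsList.length + d.primeFactorsList.length := by
              rw [← hed, (Nat.perm_primeFactorsList_mul he0 (by omega)).length_eq,
                List.length_append]
            have hcast : (n : ℝ) ^ γ = (e : ℝ) ^ γ * (d : ℝ) ^ γ := by
              rw [← hed]
              push_cast
              exact Real.mul_rpow (Nat.cast_nonneg e) (Nat.cast_nonneg d)
            have hfe := hfb e he2
            have hgd := ih d hlt hd1
            rw [abs_mul]
            calc |f e| * |g d|
                ≤ (C ^ e.primeFactorsList.length * (e : ℝ) ^ γ) *
                  ((Hfac d : ℝ) * C ^ d.primeFactorsList.length * (d : ℝ) ^ γ) := by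
                  apply mul_le_mul hfe hgd (abs_nonneg _)
                  positivity
              _ = (Hfac d : ℝ) * C ^ n.primeFactorsList.length * (n : ℝ) ^ γ := by
                  rw [hΩ, hcast, pow_add]
                  ring
        _ = (Hfac n : ℝ) * C ^ n.primeFactorsList.length * (n : ℝ) ^ γ := by
            rw [← Finset.sum_mul, ← Finset.sum_mul, ← Nat.cast_sum, ← Hfac_rec n hn2]

lemma Hfac_le_rpow (ρ : ℝ) (hρ : 1 < ρ) (hzeta : ∑' m : ℕ, (m : ℝ) ^ (-ρ) = 2) :
    ∀ n : ℕ, 1 ≤ n → (Hfac n : ℝ) ≤ (n : ℝ) ^ ρ := by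
  have hsummable : Summable (fun m : ℕ => (m : ℝ) ^ (-ρ)) :=
    Real.summable_nat_rpow.mpr (by linarith)
  intro n
  induction n using Nat.strong_induction_on with
  | _ n ih =>
    intro hn
    rcases eq_or_lt_of_le hn with h1 | h1
    · rw [← h1]
      simp [Hfac_one, Real.one_rpow]
    · have hn2 : 2 ≤ n := h1
      have hnpos : (0 : ℝ) < (n : ℝ) := by exact_mod_cast (by omega : 0 < n)
      have hinj : ∀ x ∈ n.properDivisors, ∀ y ∈ n.properDivisors,
          n / x = n / y → x = y := by
        intro x hx y hy h
        have hx' := Nat.mem_properDivisors.mp hx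
        have hy' := Nat.mem_properDivisors.mp hy
        have e1 := Nat.div_div_self hx'.1 (by omega : n ≠ 0)
        have e2 := Nat.div_div_self hy'.1 (by omega : n ≠ 0)
        rw [← e1, ← e2, h]
      have hone : (1 : ℕ) ∉ n.properDivisors.image (fun d => n / d) := by
        simp only [Finset.mem_image]
        rintro ⟨d, hd, hd1⟩
        obtain ⟨hdvd, hlt⟩ := Nat.mem_properDivisors.mp hd
        have := Nat.div_mul_cancel hdvd
        rw [hd1, one_mul] at this
        omega
      have hsum1 : ∑ m ∈ n.properDivisors.image (fun d => n / d), (m : ℝ) ^ (-ρ) ≤ 1 := by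
        have h2 : ∑ m ∈ insert 1 (n.properDivisors.image (fun d => n / d)),
            (m : ℝ) ^ (-ρ) ≤ 2 := by
          rw [← hzeta]
          exact Summable.sum_le_tsum _ (fun i _ => Real.rpow_nonneg (Nat.cast_nonneg i) _) hsummable
        rw [Finset.sum_insert hone] at h2
        have : ((1 : ℕ) : ℝ) ^ (-ρ) = 1 := by
          rw [Nat.cast_one, Real.one_rpow]
        rw [this] at h2
        linarith
      calc (Hfac n : ℝ) = ∑ d ∈ n.properDivisors, (Hfac d : ℝ) := by
            rw [Hfac_rec n hn2]
            push_cast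
            rfl
        _ ≤ ∑ d ∈ n.properDivisors, (d : ℝ) ^ ρ := by
            apply Finset.sum_le_sum
            intro d hd
            exact ih d (Nat.mem_properDivisors.mp hd).2 (Nat.pos_of_mem_properDivisors hd)
        _ = ∑ d ∈ n.properDivisors, (n : ℝ) ^ ρ * ((n / d : ℕ) : ℝ) ^ (-ρ) := by
            apply Finset.sum_congr rfl
            intro d hd
            obtain ⟨hdvd, hlt⟩ := Nat.mem_properDivisors.mp hd
            have hmul : d * (n / d) = n := Nat.mul_div_cancel' hdvd
            have hq0 : (0 : ℝ) < ((n / d : ℕ) : ℝ) := by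
              have : n / d ≠ 0 := by
                intro h; rw [h, mul_zero] at hmul; omega
              exact_mod_cast Nat.pos_of_ne_zero this
            have key : (d : ℝ) ^ ρ * ((n / d : ℕ) : ℝ) ^ ρ = (n : ℝ) ^ ρ := by
              rw [← Real.mul_rpow (Nat.cast_nonneg d) (Nat.cast_nonneg _)]
              congr 1
              exact_mod_cast congrArg (Nat.cast : ℕ → ℝ) hmul
            rw [Real.rpow_neg (Nat.cast_nonneg _), ← key, mul_assoc,
              mul_inv_cancel₀ (ne_of_gt (Real.rpow_pos_of_pos hq0 ρ)), mul_one]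
        _ = (n : ℝ) ^ ρ * ∑ d ∈ n.properDivisors, ((n / d : ℕ) : ℝ) ^ (-ρ) := by
            rw [Finset.mul_sum]
        _ = (n : ℝ) ^ ρ * ∑ m ∈ n.properDivisors.image (fun d => n / d), (m : ℝ) ^ (-ρ) := by
            rw [Finset.sum_image hinj]
        _ ≤ (n : ℝ) ^ ρ * 1 :=
            mul_le_mul_of_nonneg_left hsum1 (Real.rpow_nonneg (le_of_lt hnpos) ρ)
        _ = (n : ℝ) ^ ρ := mul_one _

theorem stmt6 (f g : ℕ → ℝ) (hf1 : f 1 = 1)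
    (hginv : ∀ n : ℕ, 0 < n →
      ∑ d ∈ n.divisors, f (n / d) * g d = if n = 1 then 1 else 0)
    (hsub : ∀ m n : ℕ, 0 < m → 0 < n → |f (m * n)| ≤ |f m| * |f n|)
    (C : ℝ) (hC : 0 < C) (γ : ℝ)
    (hf : ∀ n : ℕ, 2 ≤ n → |f n| ≤ C * (n : ℝ) ^ γ)
    (ρ : ℝ) (hρ : 1 < ρ) (hzeta : ∑' m : ℕ, (m : ℝ) ^ (-ρ) = 2) :
    ∀ n : ℕ, 2 ≤ n →
      |g n| ≤ (Hfac n : ℝ) * C ^ n.primeFactorsList.length * (n : ℝ) ^ γ ∧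
      (Hfac n : ℝ) * C ^ n.primeFactorsList.length * (n : ℝ) ^ γ ≤
        C ^ n.primeFactorsList.length * (n : ℝ) ^ (γ + ρ) := by
  intro n hn
  have hfb := f_bound f C γ hsub hf
  have hg := g_bound f g hf1 hginv C γ hC hfb n (by omega)
  refine ⟨hg, ?_⟩
  have hH := Hfac_le_rpow ρ hρ hzeta n (by omega)
  have hnpos : (0 : ℝ) < (n : ℝ) := by exact_mod_cast (by omega : 0 < n)
  rw [Real.rpow_add hnpos]
  calc (Hfac n : ℝ) * C ^ n.primeFactorsList.length * (n : ℝ) ^ γ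
      = (C ^ n.primeFactorsList.length * (n : ℝ) ^ γ) * (Hfac n : ℝ) := by ring
    _ ≤ (C ^ n.primeFactorsList.length * (n : ℝ) ^ γ) * (n : ℝ) ^ ρ := by
        apply mul_le_mul_of_nonneg_left hH
        positivity
    _ = C ^ n.primeFactorsList.length * ((n : ℝ) ^ γ * (n : ℝ) ^ ρ) := by ring
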